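/- Let φ be an exponential map on an integral domain A over a field k. Then A^φ is algebraically closed in A: every element of A that is a root of a nonzero polynomial with coefficients in A^φ lies in A^φ. -/
import Mathlib


open Polynomial

/-- An exponential map on a `k`-algebra `A`: a `k`-algebra homomorphism `φ : A → A[U]`
such that evaluating at `U = 0` is the identity and `φ_S φ_U = φ_{S+U}`. -/
def IsExpMap {k A : Type*} [CommSemiring k] [CommSemiring A] [Algebra k A]
    (φ : A →ₐ[k] A[X]) : Prop :=
  (∀ a : A, (φ a).eval 0 = a) ∧
  (∀ a : A,
    eval₂ ((mapRingHom (C : A →+* A[X])).comp (φ : A →+* A[X])) (C X) (φ a)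
      = eval₂ ((C : A[X] →+* A[X][X]).comp (C : A →+* A[X])) (X + C X) (φ a))

/-- The ring of `φ`-invariants `A^φ = {a : A | φ a = a}`. -/
noncomputable def expInv {k A : Type*} [CommSemiring k] [CommSemiring A] [Algebra k A]
    (φ : A →ₐ[k] A[X]) : Subalgebra k A :=
  AlgHom.equalizer φ (IsScalarTower.toAlgHom k A A[X])

/-- The AK invariant: the intersection of the rings of invariants of all exponential maps. -/
noncomputable def AK (k A : Type*) [CommSemiring k] [CommSemiring A] [Algebra k A] : Subalgebra k A :=
  ⨅ φ ∈ {ψ : A →ₐ[k] A[X] | IsExpMap ψ}, expInv φ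


/-- The ring of invariants of an exponential map on a domain is
algebraically closed in the domain. -/
theorem statement3 {k A : Type*} [Field k] [CommRing A] [IsDomain A] [Algebra k A]
    (φ : A →ₐ[k] A[X]) (hφ : IsExpMap φ)
    (a : A) (P : Polynomial A) (hP : ∀ i : ℕ, P.coeff i ∈ expInv φ)
    (hP0 : P ≠ 0) (hroot : P.eval a = 0) :
    a ∈ expInv φ := by
  have hinv : ∀ i : ℕ, φ (P.coeff i) = C (P.coeff i) := fun i => hP i
  have h1 : eval₂ (φ : A →+* A[X]) (φ a) P = 0 := by
    show eval₂ (φ : A →+* A[X]) ((φ : A →+* A[X]) a) P = 0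
    rw [eval₂_hom, hroot, map_zero]
  have h2 : P.comp (φ a) = 0 := by
    rw [comp, ← h1, eval₂_eq_sum, eval₂_eq_sum, Polynomial.sum, Polynomial.sum]
    exact Finset.sum_congr rfl fun i _ => by
      simp only [RingHom.coe_coe, hinv i]
  have hPdeg : P.natDegree ≠ 0 := by
    intro h
    have := Polynomial.eq_C_of_natDegree_eq_zero h
    rw [this, eval_C] at hroot
    exact hP0 (by rw [this, hroot, map_zero])
  have hdeg : (φ a).natDegree = 0 := by
    have := Polynomial.natDegree_comp (p := P) (q := φ a)
    rw [h2, natDegree_zero] at this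
    rcases Nat.mul_eq_zero.mp this.symm with h | h
    · exact absurd h hPdeg
    · exact h
  have hC : φ a = C ((φ a).coeff 0) := Polynomial.eq_C_of_natDegree_eq_zero hdeg
  have ha : (φ a).coeff 0 = a := by
    rw [Polynomial.coeff_zero_eq_eval_zero]; exact hφ.1 a
  show φ a = _
  rw [hC, ha]
  simp [IsScalarTower.toAlgHom, Polynomial.algebraMap_eq]
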